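/- Let H be a Hilbert space and T : H → H a unitary operator. For any finite-dimensional subspace F ⊆ H and any finite subset ω ⊆ F with F = span(ω), one has h_apr(T, F) = h_apr(T, ω) = h_apr(T restricted to G) = h_apr(T, G), where G is the closed linear span of ⋃_{k ∈ ℤ} T^k F. Moreover, h_apr(T) = sup_F h_apr(T, F), where the supremum is taken over all finite-dimensional subspaces F of H. -/

import Mathlib

open MeasureTheory

/-- `H_apr(ω, δ)`: the minimal dimension of a finite-dimensional subspace `F ⊆ H` such that
every `x ∈ ω` is within distance `< δ` of some `y ∈ F`. -/
noncomputable def Hapr {H : Type*} [NormedAddCommGroup H] [InnerProductSpace ℂ H]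
    (ω : Set H) (δ : ℝ) : ℕ :=
  sInf {d : ℕ | ∃ F : Submodule ℂ H, FiniteDimensional ℂ ↥F ∧ Module.finrank ℂ ↥F = d ∧
    ∀ x ∈ ω, ∃ y ∈ F, ‖x - y‖ < δ}

/-- `h_apr(T, ω, δ) = lim_{n → ∞} (1/n) H_apr(⋃_{k=0}^{n-1} T^k ω, δ)` (the limit exists by
subadditivity, hence coincides with the limit superior used here). -/
noncomputable def haprδ {H : Type*} [NormedAddCommGroup H] [InnerProductSpace ℂ H]
    (T : H → H) (ω : Set H) (δ : ℝ) : ℝ :=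
  Filter.limsup (fun n : ℕ => (Hapr (⋃ k < n, T^[k] '' ω) δ : ℝ) / n) Filter.atTop

/-- `h_apr(T, ω) = sup_{δ > 0} h_apr(T, ω, δ)`, the approximation entropy of `ω` with
respect to `T`. -/
noncomputable def haprω {H : Type*} [NormedAddCommGroup H] [InnerProductSpace ℂ H]
    (T : H → H) (ω : Set H) : ℝ :=
  ⨆ (δ : ℝ) (_ : 0 < δ), haprδ T ω δ

/-- `h_apr(T, F)`: the approximation entropy of a subspace `F`, the supremum of `h_apr(T, ω)`
over all finite subsets `ω ⊆ F`. -/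
noncomputable def haprSub {H : Type*} [NormedAddCommGroup H] [InnerProductSpace ℂ H]
    (T : H → H) (F : Submodule ℂ H) : ℝ :=
  ⨆ (ω : Finset H) (_ : (ω : Set H) ⊆ (F : Set H)), haprω T (ω : Set H)

/-! ### Generic sup helpers -/

lemma ciSup2_le {ι : Type*} {p : ι → Prop} {f : ι → ℝ} {c : ℝ}
    (h0 : 0 ≤ c) (h : ∀ i, p i → f i ≤ c) : (⨆ i, ⨆ _ : p i, f i) ≤ c := by
  refine Real.iSup_le (fun i => ?_) h0
  by_cases hi : p i
  · haveI : Nonempty (p i) := ⟨hi⟩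
    rw [ciSup_const]; exact h i hi
  · haveI : IsEmpty (p i) := ⟨hi⟩
    rw [Real.iSup_of_isEmpty]; exact h0

lemma le_ciSup2 {ι : Type*} {p : ι → Prop} {f : ι → ℝ} {c : ℝ}
    (h0 : 0 ≤ c) (h : ∀ i, p i → f i ≤ c) {i₀ : ι} (hi₀ : p i₀) :
    f i₀ ≤ ⨆ i, ⨆ _ : p i, f i := by
  have hb : BddAbove (Set.range fun i => ⨆ _ : p i, f i) := by
    refine ⟨c, ?_⟩
    rintro _ ⟨i, rfl⟩
    dsimp only
    by_cases hi : p i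
    · haveI : Nonempty (p i) := ⟨hi⟩
      rw [ciSup_const]; exact h i hi
    · haveI : IsEmpty (p i) := ⟨hi⟩
      rw [Real.iSup_of_isEmpty]; exact h0
  haveI : Nonempty (p i₀) := ⟨hi₀⟩
  calc f i₀ = ⨆ _ : p i₀, f i₀ := ciSup_const.symm
    _ ≤ _ := le_ciSup hb i₀

lemma ciSup2_eq {ι : Type*} {p : ι → Prop} {f : ι → ℝ} {c : ℝ}
    (h0 : 0 ≤ c) (h : ∀ i, p i → f i ≤ c) (hex : ∃ i, p i ∧ f i = c) :
    (⨆ i, ⨆ _ : p i, f i) = c := by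
  obtain ⟨i, hi, hfi⟩ := hex
  exact le_antisymm (ciSup2_le h0 h) (hfi ▸ le_ciSup2 h0 h hi)

lemma ciSup_eq_of {ι : Type*} [Nonempty ι] {f : ι → ℝ} {c : ℝ}
    (h : ∀ i, f i ≤ c) (hex : ∃ i, f i = c) : (⨆ i, f i) = c := by
  obtain ⟨i, hfi⟩ := hex
  refine le_antisymm (ciSup_le h) (hfi ▸ le_ciSup ⟨c, ?_⟩ i)
  rintro _ ⟨j, rfl⟩; exact h j

/-! ### limsup helper -/

open Filter in
lemma limsup_key {u v : ℕ → ℝ} {c M : ℝ} (hM : 0 ≤ M) (hc : 0 ≤ c)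
    (hu0 : ∀ n, 0 ≤ u n) (hv0 : ∀ n, 0 ≤ v n) (hvM : ∀ n, v n ≤ M)
    (huv : ∀ n : ℕ, u n ≤ v n + c / n) :
    limsup u atTop ≤ limsup v atTop := by
  have hten : Tendsto (fun n : ℕ => c / n) atTop (nhds 0) :=
    tendsto_const_div_atTop_nhds_zero_nat c
  have hlc : limsup (fun n : ℕ => c / n) atTop = 0 := hten.limsup_eq
  have hbv : IsBoundedUnder (· ≤ ·) atTop v :=
    ⟨M, Filter.eventually_map.2 (Filter.Eventually.of_forall hvM)⟩
  have hbc : IsBoundedUnder (· ≤ ·) atTop (fun n : ℕ => c / n) :=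
    hten.isBoundedUnder_le
  have hcbv : IsCoboundedUnder (· ≤ ·) atTop v :=
    (IsBoundedUnder.isCoboundedUnder_le
      ⟨0, Filter.eventually_map.2 (Filter.Eventually.of_forall hv0)⟩)
  have hcbc : IsCoboundedUnder (· ≤ ·) atTop (fun n : ℕ => c / n) :=
    hten.isCoboundedUnder_le
  have h1 : limsup u atTop ≤ limsup (v + fun n : ℕ => c / n) atTop := by
    refine limsup_le_limsup (Filter.Eventually.of_forall huv) ?_ ?_
    · exact IsBoundedUnder.isCoboundedUnder_le
        ⟨0, Filter.eventually_map.2 (Filter.Eventually.of_forall hu0)⟩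
    · exact Filter.isBoundedUnder_le_add hbv hbc
  have h2 : limsup (v + fun n : ℕ => c / n) atTop ≤
      limsup v atTop + limsup (fun n : ℕ => c / n) atTop :=
    limsup_add_le ⟨0, Filter.eventually_map.2 (Filter.Eventually.of_forall hv0)⟩ hbv hcbc hbc
  calc limsup u atTop ≤ _ := h1
    _ ≤ _ := h2
    _ = limsup v atTop := by rw [hlc, add_zero]

section Basics

variable {H : Type*} [NormedAddCommGroup H] [InnerProductSpace ℂ H]

lemma Hapr_le {A : Set H} {δ : ℝ} (F : Submodule ℂ H) [hFD : FiniteDimensional ℂ F]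
    (h : ∀ x ∈ A, ∃ y ∈ F, ‖x - y‖ < δ) : Hapr A δ ≤ Module.finrank ℂ F :=
  Nat.sInf_le ⟨F, hFD, rfl, h⟩

lemma Hapr_exists {A : Set H} (hA : A.Finite) {δ : ℝ} (hδ : 0 < δ) :
    ∃ F : Submodule ℂ H, FiniteDimensional ℂ F ∧ Module.finrank ℂ F = Hapr A δ ∧
      ∀ x ∈ A, ∃ y ∈ F, ‖x - y‖ < δ := by
  have hne : {d : ℕ | ∃ F : Submodule ℂ H, FiniteDimensional ℂ ↥F ∧
      Module.finrank ℂ ↥F = d ∧ ∀ x ∈ A, ∃ y ∈ F, ‖x - y‖ < δ}.Nonempty := by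
    refine ⟨_, Submodule.span ℂ A, FiniteDimensional.span_of_finite ℂ hA, rfl,
      fun x hx => ⟨x, Submodule.subset_span hx, by simpa using hδ⟩⟩
  exact Nat.sInf_mem hne

/-- The finset `⋃_{k<n} T^k ω`. -/
noncomputable def UU (T : H → H) (ω : Finset H) (n : ℕ) : Finset H :=
  letI := Classical.decEq H
  (Finset.range n).biUnion fun k => ω.image (T^[k])

lemma coe_UU (T : H → H) (ω : Finset H) (n : ℕ) :
    (UU T ω n : Set H) = ⋃ k < n, T^[k] '' (ω : Set H) := by
  letI := Classical.decEq H
  ext x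
  simp [UU]

lemma mem_UU {T : H → H} {ω : Finset H} {n : ℕ} {x : H} :
    x ∈ UU T ω n ↔ ∃ k < n, ∃ y ∈ ω, T^[k] y = x := by
  letI := Classical.decEq H
  simp [UU]

lemma card_UU (T : H → H) (ω : Finset H) (n : ℕ) : (UU T ω n).card ≤ n * ω.card := by
  letI := Classical.decEq H
  refine le_trans Finset.card_biUnion_le ?_
  calc ∑ k ∈ Finset.range n, (ω.image (T^[k])).card
      ≤ ∑ _k ∈ Finset.range n, ω.card :=
        Finset.sum_le_sum fun k _ => Finset.card_image_le
    _ = n * ω.card := by simp [Finset.sum_const, Finset.card_range]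

lemma Hapr_le_card {s : Finset H} {δ : ℝ} (hδ : 0 < δ) : Hapr (s : Set H) δ ≤ s.card := by
  haveI : FiniteDimensional ℂ (Submodule.span ℂ (s : Set H)) :=
    FiniteDimensional.span_of_finite ℂ s.finite_toSet
  refine le_trans (Hapr_le (Submodule.span ℂ (s : Set H))
    (fun x hx => ⟨x, Submodule.subset_span hx, by simpa using hδ⟩)) ?_
  exact finrank_span_finset_le_card s

lemma haprδ_eq (T : H → H) (ω : Finset H) (δ : ℝ) :
    haprδ T (ω : Set H) δ =
      Filter.limsup (fun n : ℕ => (Hapr (UU T ω n : Set H) δ : ℝ) / n) Filter.atTop := by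
  unfold haprδ
  simp_rw [coe_UU]

lemma div_card_le (T : H → H) (ω : Finset H) {δ : ℝ} (hδ : 0 < δ) (n : ℕ) :
    (Hapr (UU T ω n : Set H) δ : ℝ) / n ≤ ω.card := by
  rcases Nat.eq_zero_or_pos n with rfl | hn
  · simp [Nat.cast_nonneg]
  · rw [div_le_iff₀ (by exact_mod_cast hn : (0:ℝ) < n)]
    have := le_trans (Hapr_le_card (s := UU T ω n) hδ) (card_UU T ω n)
    calc (Hapr (UU T ω n : Set H) δ : ℝ) ≤ (n * ω.card : ℕ) := by exact_mod_cast this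
      _ = (ω.card : ℝ) * n := by push_cast; ring

lemma haprδ_nonneg (T : H → H) (ω : Finset H) {δ : ℝ} (hδ : 0 < δ) :
    0 ≤ haprδ T (ω : Set H) δ := by
  rw [haprδ_eq]
  refine Filter.le_limsup_of_frequently_le (Filter.Frequently.of_forall fun n => ?_) ?_
  · positivity
  · exact ⟨(ω.card : ℝ), Filter.eventually_map.2
      (Filter.Eventually.of_forall (div_card_le T ω hδ))⟩

lemma haprδ_le_card (T : H → H) (ω : Finset H) {δ : ℝ} (hδ : 0 < δ) :
    haprδ T (ω : Set H) δ ≤ ω.card := by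
  rw [haprδ_eq]
  refine Filter.limsup_le_of_le ?_ (Filter.Eventually.of_forall (div_card_le T ω hδ))
  exact Filter.IsBoundedUnder.isCoboundedUnder_le
    ⟨0, Filter.eventually_map.2 (Filter.Eventually.of_forall fun n => by positivity)⟩

lemma haprω_le_card (T : H → H) (ω : Finset H) : haprω T (ω : Set H) ≤ ω.card := by
  unfold haprω
  exact ciSup2_le (p := fun δ : ℝ => 0 < δ) (f := fun δ => haprδ T (ω : Set H) δ)
    (by positivity) fun δ hδ => haprδ_le_card T ω hδ

lemma haprδ_le_haprω (T : H → H) (ω : Finset H) {δ : ℝ} (hδ : 0 < δ) :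
    haprδ T (ω : Set H) δ ≤ haprω T (ω : Set H) := by
  unfold haprω
  exact le_ciSup2 (p := fun δ : ℝ => 0 < δ) (f := fun δ => haprδ T (ω : Set H) δ)
    (by positivity) (fun δ' hδ' => haprδ_le_card T ω hδ') hδ

lemma haprω_nonneg (T : H → H) (ω : Finset H) : 0 ≤ haprω T (ω : Set H) :=
  le_trans (haprδ_nonneg T ω one_pos) (haprδ_le_haprω T ω one_pos)

end Basics

section MainLemma

variable {H : Type*} [NormedAddCommGroup H] [InnerProductSpace ℂ H]

lemma zpow_apply_add (T : H ≃ₗᵢ[ℂ] H) (a b : ℤ) (x : H) :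
    (T ^ (a + b)) x = (T ^ a) ((T ^ b) x) := by
  rw [zpow_add, LinearIsometryEquiv.coe_mul, Function.comp_apply]

lemma iterate_eq_pow (T : H ≃ₗᵢ[ℂ] H) (k : ℕ) (x : H) :
    (⇑T)^[k] x = (T ^ (k : ℤ)) x := by
  induction k with
  | zero => simp [LinearIsometryEquiv.coe_one]
  | succ k ih =>
      rw [Function.iterate_succ_apply', ih]
      have : ((k : ℤ) + 1) = 1 + (k : ℤ) := by ring
      rw [show ((k + 1 : ℕ) : ℤ) = 1 + (k : ℤ) by push_cast; ring,
        zpow_apply_add T 1 (k : ℤ) x, zpow_one]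

/-- The finset `⋃_{|k| ≤ m} T^k ω`. -/
noncomputable def BB (T : H ≃ₗᵢ[ℂ] H) (ω : Finset H) (m : ℕ) : Finset H :=
  letI := Classical.decEq H
  (Finset.Icc (-(m : ℤ)) (m : ℤ)).biUnion fun k => ω.image ⇑(T ^ k)

lemma mem_BB {T : H ≃ₗᵢ[ℂ] H} {ω : Finset H} {m : ℕ} {x : H} :
    x ∈ BB T ω m ↔ ∃ k : ℤ, -(m : ℤ) ≤ k ∧ k ≤ m ∧ ∃ y ∈ ω, (T ^ k) y = x := by
  letI := Classical.decEq H
  simp [BB, Finset.mem_Icc, and_assoc]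

lemma BB_mono (T : H ≃ₗᵢ[ℂ] H) (ω : Finset H) : Monotone (fun m => BB T ω m) := by
  intro a b hab x hx
  rw [mem_BB] at hx ⊢
  obtain ⟨k, h1, h2, hy⟩ := hx
  exact ⟨k, le_trans (by exact_mod_cast neg_le_neg (Int.ofNat_le.2 hab)) h1,
    le_trans h2 (by exact_mod_cast hab), hy⟩

lemma span_iUnion_eq_iSup_BB (T : H ≃ₗᵢ[ℂ] H) (ω : Finset H) :
    Submodule.span ℂ (⋃ k : ℤ, ⇑(T ^ k) '' (ω : Set H)) =
      ⨆ m : ℕ, Submodule.span ℂ ((BB T ω m : Set H)) := by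
  rw [← Submodule.span_iUnion]
  congr 1
  ext x
  simp only [Set.mem_iUnion, Set.mem_image, Finset.mem_coe, mem_BB]
  constructor
  · rintro ⟨k, y, hy, rfl⟩
    exact ⟨k.natAbs, k, by omega, by omega, y, hy, rfl⟩
  · rintro ⟨m, k, _, _, y, hy, rfl⟩
    exact ⟨k, y, hy, rfl⟩

set_option maxHeartbeats 2000000 in
lemma main_lemma (T : H ≃ₗᵢ[ℂ] H) (ω₁ ω₂ : Finset H)
    (h : (ω₂ : Set H) ⊆
      closure ((Submodule.span ℂ (⋃ k : ℤ, ⇑(T ^ k) '' (ω₁ : Set H))) : Set H)) :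
    haprω ⇑T (ω₂ : Set H) ≤ haprω ⇑T (ω₁ : Set H) := by
  classical
  have key : ∀ δ : ℝ, 0 < δ → haprδ ⇑T (ω₂ : Set H) δ ≤ haprω ⇑T (ω₁ : Set H) := by
    intro δ hδ
    -- choose approximants in the span
    have hz : ∀ x ∈ ω₂, ∃ z ∈ Submodule.span ℂ (⋃ k : ℤ, ⇑(T ^ k) '' (ω₁ : Set H)),
        ‖x - z‖ < δ / 3 := by
      intro x hx
      have := Metric.mem_closure_iff.1 (h hx) (δ / 3) (by positivity)
      obtain ⟨z, hzW, hz⟩ := this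
      exact ⟨z, hzW, by rwa [← dist_eq_norm]⟩
    choose z hzW hz using hz
    -- uniform bound on powers needed
    have hzBB : ∀ x (hx : x ∈ ω₂), ∃ m : ℕ,
        z x hx ∈ Submodule.span ℂ ((BB T ω₁ m : Set H)) := by
      intro x hx
      have hdir : Directed (· ≤ ·) (fun m : ℕ => Submodule.span ℂ ((BB T ω₁ m : Set H))) :=
        (Monotone.directed_le fun a b hab =>
          Submodule.span_mono (by exact_mod_cast BB_mono T ω₁ hab))
      exact (Submodule.mem_iSup_of_directed _ hdir).1
        (span_iUnion_eq_iSup_BB T ω₁ ▸ hzW x hx)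
    choose m_ hm_ using hzBB
    obtain ⟨m, hm⟩ : ∃ m : ℕ, ∀ x (hx : x ∈ ω₂),
        z x hx ∈ Submodule.span ℂ ((BB T ω₁ m : Set H)) := by
      refine ⟨ω₂.attach.sup fun x => m_ x.1 x.2, fun x hx => ?_⟩
      have hle : m_ x hx ≤ ω₂.attach.sup fun x => m_ x.1 x.2 :=
        Finset.le_sup (f := fun x : {x // x ∈ ω₂} => m_ x.1 x.2)
          (Finset.mem_attach _ ⟨x, hx⟩)
      exact Submodule.span_mono (by exact_mod_cast BB_mono T ω₁ hle) (hm_ x hx)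
    -- coefficients
    have hcoef : ∀ x (hx : x ∈ ω₂), ∃ f : H → ℂ,
        ∑ b ∈ BB T ω₁ m, f b • b = z x hx := fun x hx => by
          obtain ⟨f, -, hf⟩ := Submodule.mem_span_finset.1 (hm x hx); exact ⟨f, hf⟩
    choose f hf using hcoef
    obtain ⟨C, hC1, hCx⟩ : ∃ C : ℝ, 1 ≤ C ∧
        ∀ x (hx : x ∈ ω₂), ∑ b ∈ BB T ω₁ m, ‖f x hx b‖ ≤ C := by
      refine ⟨1 + ∑ x ∈ ω₂.attach, ∑ b ∈ BB T ω₁ m, ‖f x.1 x.2 b‖, ?_, ?_⟩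
      · have : (0:ℝ) ≤ ∑ x ∈ ω₂.attach, ∑ b ∈ BB T ω₁ m, ‖f x.1 x.2 b‖ :=
          Finset.sum_nonneg fun _ _ => Finset.sum_nonneg fun _ _ => norm_nonneg _
        linarith
      · intro x hx
        have h1 : (fun x : {x // x ∈ ω₂} => ∑ b ∈ BB T ω₁ m, ‖f x.1 x.2 b‖) ⟨x, hx⟩ ≤
            ∑ x ∈ ω₂.attach, ∑ b ∈ BB T ω₁ m, ‖f x.1 x.2 b‖ :=
          Finset.single_le_sum (f := fun x : {x // x ∈ ω₂} => ∑ b ∈ BB T ω₁ m, ‖f x.1 x.2 b‖)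
            (fun _ _ => Finset.sum_nonneg fun _ _ => norm_nonneg _)
            (Finset.mem_attach _ ⟨x, hx⟩)
        simp only at h1
        linarith
    have hC0 : 0 < C := by linarith
    set δ' : ℝ := δ / (3 * C) with hδ'def
    have hδ' : 0 < δ' := by positivity
    -- step 5
    have step5 : ∀ n : ℕ, Hapr (UU ⇑T ω₂ n : Set H) δ ≤
        Hapr (UU ⇑T ω₁ (n + 2 * m) : Set H) δ' := by
      intro n
      obtain ⟨F, hFD, hFr, hFapp⟩ :=
        Hapr_exists (A := (UU ⇑T ω₁ (n + 2 * m) : Set H)) (Finset.finite_toSet _) hδ'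
      set e : H ≃ₗ[ℂ] H := (T ^ (-(m : ℤ))).toLinearEquiv with he
      set E : Submodule ℂ H := F.map (e : H →ₗ[ℂ] H) with hE
      haveI : FiniteDimensional ℂ E := Module.Finite.map F _
      have happE : ∀ p ∈ (UU ⇑T ω₂ n : Set H), ∃ y ∈ E, ‖p - y‖ < δ := by
        intro p hp
        rw [Finset.mem_coe, mem_UU] at hp
        obtain ⟨k, hk, x, hx, rfl⟩ := hp
        -- approximate each T^(k+m) b by an element of F
        have hb : ∀ b ∈ BB T ω₁ m, ∃ u ∈ F, ‖(T ^ ((k : ℤ) + m)) b - u‖ < δ' := by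
          intro b hbB
          rw [mem_BB] at hbB
          obtain ⟨j, hj1, hj2, y, hy, rfl⟩ := hbB
          have hl0 : (0:ℤ) ≤ (k : ℤ) + m + j := by omega
          set l : ℕ := ((k : ℤ) + m + j).toNat with hl
          have hlk : ((l : ℤ)) = (k : ℤ) + m + j := Int.toNat_of_nonneg hl0
          have hlt : l < n + 2 * m := by omega
          have heq : (T ^ ((k : ℤ) + m)) ((T ^ j) y) = (⇑T)^[l] y := by
            rw [← zpow_apply_add, iterate_eq_pow, hlk]
          have hmem : (⇑T)^[l] y ∈ (UU ⇑T ω₁ (n + 2 * m) : Set H) := by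
            rw [Finset.mem_coe, mem_UU]
            exact ⟨l, hlt, y, hy, rfl⟩
          obtain ⟨u, huF, hu⟩ := hFapp _ hmem
          exact ⟨u, huF, by rwa [heq]⟩
        choose u huF hu using hb
        refine ⟨(T ^ (-(m : ℤ))) (∑ b ∈ (BB T ω₁ m).attach, f x hx b.1 • u b.1 b.2), ?_, ?_⟩
        · refine Submodule.mem_map_of_mem ?_
          exact Submodule.sum_mem _ fun b _ => Submodule.smul_mem _ _ (huF b.1 b.2)
        · have e1 : (⇑T)^[k] x = (T ^ (-(m : ℤ))) ((T ^ ((k : ℤ) + m)) x) := by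
            rw [← zpow_apply_add, iterate_eq_pow]
            norm_num
          rw [e1, ← map_sub, LinearIsometryEquiv.norm_map]
          have e2 : (T ^ ((k : ℤ) + m)) x - ∑ b ∈ (BB T ω₁ m).attach, f x hx b.1 • u b.1 b.2
              = ((T ^ ((k : ℤ) + m)) x - (T ^ ((k : ℤ) + m)) (z x hx)) +
                ∑ b ∈ (BB T ω₁ m).attach,
                  f x hx b.1 • ((T ^ ((k : ℤ) + m)) b.1 - u b.1 b.2) := by
            have hz' : (T ^ ((k : ℤ) + m)) (z x hx) =
                ∑ b ∈ (BB T ω₁ m).attach, f x hx b.1 • (T ^ ((k : ℤ) + m)) b.1 := by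
              rw [← hf x hx, ← Finset.sum_attach (BB T ω₁ m) (fun b => f x hx b • b)]
              rw [map_sum]
              simp_rw [LinearIsometryEquiv.map_smul]
            rw [hz']
            simp_rw [smul_sub]
            rw [Finset.sum_sub_distrib]
            abel
          rw [e2]
          have hn1 : ‖(T ^ ((k : ℤ) + m)) x - (T ^ ((k : ℤ) + m)) (z x hx)‖ < δ / 3 := by
            rw [← map_sub, LinearIsometryEquiv.norm_map]
            exact hz x hx
          have hn2 : ‖∑ b ∈ (BB T ω₁ m).attach,
              f x hx b.1 • ((T ^ ((k : ℤ) + m)) b.1 - u b.1 b.2)‖ ≤ δ / 3 := by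
            refine le_trans (norm_sum_le _ _) ?_
            have hterm : ∀ b ∈ (BB T ω₁ m).attach,
                ‖f x hx b.1 • ((T ^ ((k : ℤ) + m)) b.1 - u b.1 b.2)‖ ≤ ‖f x hx b.1‖ * δ' := by
              intro b _
              rw [norm_smul]
              exact mul_le_mul_of_nonneg_left (le_of_lt (hu b.1 b.2)) (norm_nonneg _)
            refine le_trans (Finset.sum_le_sum hterm) ?_
            have : ∑ b ∈ (BB T ω₁ m).attach, ‖f x hx b.1‖ * δ' =
                (∑ b ∈ BB T ω₁ m, ‖f x hx b‖) * δ' := by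
              rw [← Finset.sum_mul]
              congr 1
              exact Finset.sum_attach _ (fun b => ‖f x hx b‖)
            rw [this]
            calc (∑ b ∈ BB T ω₁ m, ‖f x hx b‖) * δ' ≤ C * δ' :=
                  mul_le_mul_of_nonneg_right (hCx x hx) (le_of_lt hδ')
              _ = δ / 3 := by
                  rw [hδ'def]; field_simp
          calc ‖_ + _‖ ≤ _ := norm_add_le _ _
            _ < δ / 3 + δ / 3 := by linarith
            _ < δ := by linarith
      calc Hapr (UU ⇑T ω₂ n : Set H) δ ≤ Module.finrank ℂ E := Hapr_le E happE
        _ = Module.finrank ℂ F := LinearEquiv.finrank_map_eq e F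
        _ = Hapr (UU ⇑T ω₁ (n + 2 * m) : Set H) δ' := hFr
    -- step 6
    have step6 : ∀ n : ℕ, Hapr (UU ⇑T ω₁ (n + 2 * m) : Set H) δ' ≤
        Hapr (UU ⇑T ω₁ n : Set H) δ' + 2 * m * ω₁.card := by
      intro n
      obtain ⟨F, hFD, hFr, hFapp⟩ :=
        Hapr_exists (A := (UU ⇑T ω₁ n : Set H)) (Finset.finite_toSet _) hδ'
      set D : Finset H := (Finset.Ico n (n + 2 * m)).biUnion fun k => ω₁.image ((⇑T)^[k])
        with hD
      haveI : FiniteDimensional ℂ (Submodule.span ℂ (D : Set H)) :=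
        FiniteDimensional.span_of_finite ℂ D.finite_toSet
      set E : Submodule ℂ H := F ⊔ Submodule.span ℂ (D : Set H) with hE
      haveI : FiniteDimensional ℂ E := Submodule.finiteDimensional_sup _ _
      have happE : ∀ p ∈ (UU ⇑T ω₁ (n + 2 * m) : Set H), ∃ y ∈ E, ‖p - y‖ < δ' := by
        intro p hp
        rw [Finset.mem_coe, mem_UU] at hp
        obtain ⟨k, hk, x, hx, rfl⟩ := hp
        by_cases hkn : k < n
        · obtain ⟨y, hyF, hy⟩ := hFapp ((⇑T)^[k] x) (by
            rw [Finset.mem_coe, mem_UU]; exact ⟨k, hkn, x, hx, rfl⟩)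
          exact ⟨y, Submodule.mem_sup_left hyF, hy⟩
        · refine ⟨(⇑T)^[k] x, Submodule.mem_sup_right (Submodule.subset_span ?_), by
            simpa using hδ'⟩
          rw [Finset.mem_coe, hD, Finset.mem_biUnion]
          exact ⟨k, Finset.mem_Ico.2 ⟨not_lt.1 hkn, hk⟩, Finset.mem_image_of_mem _ hx⟩
      have hcard : Module.finrank ℂ E ≤ Module.finrank ℂ F + 2 * m * ω₁.card := by
        have h1 := Submodule.finrank_sup_add_finrank_inf_eq F (Submodule.span ℂ (D : Set H))
        have h2 : Module.finrank ℂ (Submodule.span ℂ (D : Set H)) ≤ D.card :=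
          finrank_span_finset_le_card D
        rw [hE]
        have h3 : D.card ≤ 2 * m * ω₁.card := by
          refine le_trans Finset.card_biUnion_le ?_
          calc ∑ k ∈ Finset.Ico n (n + 2 * m), (ω₁.image ((⇑T)^[k])).card
              ≤ ∑ _k ∈ Finset.Ico n (n + 2 * m), ω₁.card :=
                Finset.sum_le_sum fun k _ => Finset.card_image_le
            _ = 2 * m * ω₁.card := by simp [Nat.add_sub_cancel_left]
        omega
      calc Hapr (UU ⇑T ω₁ (n + 2 * m) : Set H) δ' ≤ Module.finrank ℂ E := Hapr_le E happE
        _ ≤ Module.finrank ℂ F + 2 * m * ω₁.card := hcard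
        _ = Hapr (UU ⇑T ω₁ n : Set H) δ' + 2 * m * ω₁.card := by rw [hFr]
    -- step 7 : limsup comparison
    have step7 : haprδ ⇑T (ω₂ : Set H) δ ≤ haprδ ⇑T (ω₁ : Set H) δ' := by
      rw [haprδ_eq, haprδ_eq]
      refine limsup_key (M := (ω₁.card : ℝ)) (c := (2 * m * ω₁.card : ℕ))
        (by positivity) (by positivity)
        (fun n => by positivity) (fun n => by positivity)
        (fun n => div_card_le ⇑T ω₁ hδ' n) (fun n => ?_)
      rcases Nat.eq_zero_or_pos n with rfl | hn
      · simp only [Nat.cast_zero, div_zero]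
        positivity
      · have hcomb : (Hapr (UU ⇑T ω₂ n : Set H) δ : ℝ) ≤
            (Hapr (UU ⇑T ω₁ n : Set H) δ' : ℝ) + (2 * m * ω₁.card : ℕ) := by
          exact_mod_cast le_trans (step5 n) (step6 n)
        have hn' : (0:ℝ) < n := by exact_mod_cast hn
        calc (Hapr (UU ⇑T ω₂ n : Set H) δ : ℝ) / n ≤
            ((Hapr (UU ⇑T ω₁ n : Set H) δ' : ℝ) + (2 * m * ω₁.card : ℕ)) / n :=
              div_le_div_of_nonneg_right hcomb hn'.le
          _ = (Hapr (UU ⇑T ω₁ n : Set H) δ' : ℝ) / n + (2 * m * ω₁.card : ℕ) / n := by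
              rw [add_div]
    exact le_trans step7 (haprδ_le_haprω ⇑T ω₁ hδ')
  calc haprω ⇑T (ω₂ : Set H) = ⨆ (δ : ℝ) (_ : 0 < δ), haprδ ⇑T (ω₂ : Set H) δ := rfl
    _ ≤ haprω ⇑T (ω₁ : Set H) :=
      ciSup2_le (p := fun δ : ℝ => 0 < δ) (f := fun δ => haprδ ⇑T (ω₂ : Set H) δ)
        (haprω_nonneg ⇑T ω₁) key

end MainLemma

section Transfer

variable {H : Type*} [NormedAddCommGroup H] [InnerProductSpace ℂ H] [CompleteSpace H]
variable (G : Submodule ℂ H) [CompleteSpace ↥G]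

lemma Hapr_subtype (A : Set ↥G) (hA : A.Finite) {δ : ℝ} (hδ : 0 < δ) :
    Hapr ((Subtype.val '' A : Set H)) δ = Hapr A δ := by
  apply le_antisymm
  · obtain ⟨K, hKD, hKr, hKapp⟩ := Hapr_exists hA hδ
    haveI : FiniteDimensional ℂ (K.map G.subtype) := Module.Finite.map _ _
    have happ : ∀ x ∈ Subtype.val '' A, ∃ y ∈ K.map G.subtype, ‖x - y‖ < δ := by
      rintro _ ⟨a, ha, rfl⟩
      obtain ⟨k, hk, hnorm⟩ := hKapp a ha
      refine ⟨(k : H), Submodule.mem_map_of_mem hk, ?_⟩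
      have : ((a - k : ↥G) : H) = (a : H) - (k : H) := rfl
      rw [← this]
      exact hnorm
    calc Hapr (Subtype.val '' A) δ ≤ Module.finrank ℂ (K.map G.subtype) :=
          Hapr_le _ happ
      _ = Module.finrank ℂ K := Submodule.finrank_map_subtype_eq G K
      _ = Hapr A δ := hKr
  · obtain ⟨F', hFD, hFr, hFapp⟩ := Hapr_exists (hA.image (Subtype.val : ↥G → H)) hδ
    set P := G.orthogonalProjectionOnto with hP
    set K : Submodule ℂ ↥G := F'.map (P : H →ₗ[ℂ] ↥G) with hK
    haveI : FiniteDimensional ℂ K := Module.Finite.map _ _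
    have happ : ∀ a ∈ A, ∃ y ∈ K, ‖a - y‖ < δ := by
      intro a ha
      obtain ⟨y, hyF, hy⟩ := hFapp (a : H) (Set.mem_image_of_mem _ ha)
      refine ⟨P y, Submodule.mem_map_of_mem hyF, ?_⟩
      have e1 : a - P y = P ((a : H) - y) := by
        rw [map_sub]
        congr 1
        exact (Submodule.orthogonalProjectionOnto_mem_subspace_eq_self a).symm
      rw [e1]
      calc ‖P ((a : H) - y)‖ ≤ ‖P‖ * ‖(a : H) - y‖ := P.le_opNorm _
        _ ≤ 1 * ‖(a : H) - y‖ :=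
            mul_le_mul_of_nonneg_right (Submodule.orthogonalProjectionOnto_norm_le G) (norm_nonneg _)
        _ = ‖(a : H) - y‖ := one_mul _
        _ < δ := hy
    calc Hapr A δ ≤ Module.finrank ℂ K := Hapr_le _ happ
      _ ≤ Module.finrank ℂ F' := Submodule.finrank_map_le _ _
      _ = Hapr (Subtype.val '' A) δ := hFr

variable {G}

lemma S_iterate {S : ↥G ≃ₗᵢ[ℂ] ↥G} {T : H ≃ₗᵢ[ℂ] H}
    (hS : ∀ x : ↥G, ((S x : ↥G) : H) = T (x : H)) (k : ℕ) (x : ↥G) :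
    (((⇑S)^[k] x : ↥G) : H) = (⇑T)^[k] (x : H) := by
  induction k with
  | zero => rfl
  | succ k ih =>
      rw [Function.iterate_succ_apply', Function.iterate_succ_apply', hS, ih]

lemma haprδ_transfer {S : ↥G ≃ₗᵢ[ℂ] ↥G} {T : H ≃ₗᵢ[ℂ] H}
    (hS : ∀ x : ↥G, ((S x : ↥G) : H) = T (x : H)) (ω' : Finset ↥G) {δ : ℝ} (hδ : 0 < δ) :
    haprδ ⇑S (ω' : Set ↥G) δ = haprδ ⇑T (Subtype.val '' (ω' : Set ↥G)) δ := by
  unfold haprδ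
  congr 1
  funext n
  congr 2
  have hfin : (⋃ k < n, (⇑S)^[k] '' (ω' : Set ↥G)).Finite :=
    Set.Finite.biUnion (Set.finite_Iio n) fun k _ => (ω'.finite_toSet.image _)
  rw [← Hapr_subtype G _ hfin hδ]
  congr 1
  rw [Set.image_iUnion₂]
  refine Set.iUnion₂_congr fun k _ => ?_
  rw [← Set.image_comp, ← Set.image_comp,
    show (Subtype.val ∘ (⇑S)^[k]) = ((⇑T)^[k] ∘ (Subtype.val : ↥G → H)) from
      funext (S_iterate hS k)]

lemma haprω_transfer {S : ↥G ≃ₗᵢ[ℂ] ↥G} {T : H ≃ₗᵢ[ℂ] H}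
    (hS : ∀ x : ↥G, ((S x : ↥G) : H) = T (x : H)) (ω' : Finset ↥G) :
    haprω ⇑S (ω' : Set ↥G) = haprω ⇑T (Subtype.val '' (ω' : Set ↥G)) := by
  unfold haprω
  refine iSup_congr fun δ => iSup_congr fun hδ => haprδ_transfer hS ω' hδ

end Transfer

section Assembly

variable {H : Type*} [NormedAddCommGroup H] [InnerProductSpace ℂ H]

lemma subset_iUnion_zpow (T : H ≃ₗᵢ[ℂ] H) (s : Set H) : s ⊆ ⋃ k : ℤ, ⇑(T ^ k) '' s :=
  fun x hx => Set.mem_iUnion.2 ⟨0, ⟨x, hx, by simp [LinearIsometryEquiv.coe_one]⟩⟩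

lemma span_subset_closure_span (T : H ≃ₗᵢ[ℂ] H) (s : Finset H) :
    ((Submodule.span ℂ (s : Set H) : Submodule ℂ H) : Set H) ⊆
      closure ((Submodule.span ℂ (⋃ k : ℤ, ⇑(T ^ k) '' (s : Set H))) : Set H) :=
  fun x hx => subset_closure (Submodule.span_mono (subset_iUnion_zpow T _) hx)

lemma haprSub_span (T : H ≃ₗᵢ[ℂ] H) (s : Finset H) (F' : Submodule ℂ H)
    (hs : Submodule.span ℂ (s : Set H) = F') :
    haprSub ⇑T F' = haprω ⇑T (s : Set H) := by
  unfold haprSub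
  refine ciSup2_eq (haprω_nonneg ⇑T s) (fun ω' hω' => main_lemma T s ω' ?_) ⟨s, ?_, rfl⟩
  · have h1 : (ω' : Set H) ⊆ ((Submodule.span ℂ (s : Set H) : Submodule ℂ H) : Set H) := by
      rw [hs]; exact hω'
    exact h1.trans (span_subset_closure_span T s)
  · rw [← hs]; exact Submodule.subset_span

end Assembly


set_option maxHeartbeats 1000000 in
/-- Let `T` be a unitary operator on a Hilbert space `H`, `F ⊆ H` a
finite-dimensional subspace and `ω ⊆ F` a finite subset with `F = span ω`. Then
`h_apr(T, F) = h_apr(T, ω) = h_apr(T ↾ G) = h_apr(T, G)`, where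
`G = closed span ⋃_{k ∈ ℤ} T^k F` (the restriction `T ↾ G` is the unitary operator `S` on the
Hilbert space `G` induced by `T`, and `h_apr` of an operator is `h_apr` of the full space).
Moreover, `h_apr(T) = sup_F h_apr(T, F)`, the supremum over all finite-dimensional
subspaces `F ⊆ H`. -/
theorem stmt7 {H : Type*} [NormedAddCommGroup H] [InnerProductSpace ℂ H] [CompleteSpace H]
    (T : H ≃ₗᵢ[ℂ] H) (F : Submodule ℂ H) [FiniteDimensional ℂ ↥F]
    (ω : Finset H) (hωF : (ω : Set H) ⊆ (F : Set H))
    (hspan : Submodule.span ℂ (ω : Set H) = F) :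
    (∀ G : Submodule ℂ H,
      G = (Submodule.span ℂ (⋃ k : ℤ, ⇑(T ^ k) '' (F : Set H))).topologicalClosure →
      ∀ S : ↥G ≃ₗᵢ[ℂ] ↥G, (∀ x : ↥G, ((S x : ↥G) : H) = T (x : H)) →
        haprSub (⇑T) F = haprω (⇑T) (ω : Set H) ∧
        haprω (⇑T) (ω : Set H) = (⨆ ω' : Finset ↥G, haprω (⇑S) (ω' : Set ↥G)) ∧
        (⨆ ω' : Finset ↥G, haprω (⇑S) (ω' : Set ↥G)) = haprSub (⇑T) G) ∧
    (⨆ ω₀ : Finset H, haprω (⇑T) (ω₀ : Set H)) =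
      ⨆ (F' : Submodule ℂ H) (_ : FiniteDimensional ℂ ↥F'), haprSub (⇑T) F' := by
  classical
  constructor
  · intro G hG S hS
    haveI hGc : CompleteSpace ↥G := by rw [hG]; infer_instance
    have hWle : Submodule.span ℂ (⋃ k : ℤ, ⇑(T ^ k) '' (F : Set H)) ≤
        Submodule.span ℂ (⋃ k : ℤ, ⇑(T ^ k) '' (ω : Set H)) := by
      rw [Submodule.span_le]
      intro x hx
      rw [Set.mem_iUnion] at hx
      obtain ⟨k, hk⟩ := hx
      obtain ⟨y, hyF, rfl⟩ := hk
      rw [← hspan, SetLike.mem_coe] at hyF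
      have h2 : (T ^ k) y ∈ Submodule.span ℂ (⇑(T ^ k) '' (ω : Set H)) := by
        have := Submodule.apply_mem_span_image_of_mem_span
          ((T ^ k).toLinearEquiv : H →ₗ[ℂ] H) hyF
        simpa using this
      exact Submodule.span_mono
        (Set.subset_iUnion (fun k : ℤ => ⇑(T ^ k) '' (ω : Set H)) k) h2
    have hGsub : (G : Set H) ⊆
        closure ((Submodule.span ℂ (⋃ k : ℤ, ⇑(T ^ k) '' (ω : Set H))) : Set H) := by
      rw [hG, Submodule.topologicalClosure_coe]
      exact closure_mono hWle
    have hFG : F ≤ G := by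
      rw [hG]
      refine le_trans ?_ (Submodule.le_topologicalClosure _)
      exact fun x hx => Submodule.subset_span (subset_iUnion_zpow T (F : Set H) hx)
    have hωG : (ω : Set H) ⊆ (G : Set H) := hωF.trans (SetLike.coe_subset_coe.2 hFG)
    have key : ∀ ω₀ : Finset H, (ω₀ : Set H) ⊆ (G : Set H) →
        haprω ⇑T (ω₀ : Set H) ≤ haprω ⇑T (ω : Set H) :=
      fun ω₀ hω₀ => main_lemma T ω ω₀ (hω₀.trans hGsub)
    have hB : (⨆ ω' : Finset ↥G, haprω (⇑S) (ω' : Set ↥G)) = haprω ⇑T (ω : Set H) := by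
      refine ciSup_eq_of (fun ω' => ?_) ?_
      · rw [haprω_transfer hS ω']
        have himg : Subtype.val '' (ω' : Set ↥G) =
            ((ω'.image Subtype.val : Finset H) : Set H) := by
          rw [Finset.coe_image]
        rw [himg]
        refine key _ ?_
        intro x hx
        rw [Finset.coe_image, Set.mem_image] at hx
        obtain ⟨a, _, rfl⟩ := hx
        exact a.2
      · refine ⟨ω.attach.image (fun x => (⟨x.1, hωG x.2⟩ : ↥G)), ?_⟩
        rw [haprω_transfer hS _]
        have himg : Subtype.val ''
            ((ω.attach.image (fun x => (⟨x.1, hωG x.2⟩ : ↥G)) : Finset ↥G) : Set ↥G) =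
            (ω : Set H) := by
          ext y
          constructor
          · rintro ⟨a, ha, rfl⟩
            rw [Finset.mem_coe, Finset.mem_image] at ha
            obtain ⟨x, -, rfl⟩ := ha
            exact x.2
          · intro hy
            refine ⟨⟨y, hωG hy⟩, ?_, rfl⟩
            rw [Finset.mem_coe, Finset.mem_image]
            exact ⟨⟨y, hy⟩, Finset.mem_attach _ _, rfl⟩
        rw [himg]
    have hC : haprSub ⇑T G = haprω ⇑T (ω : Set H) := by
      unfold haprSub
      exact ciSup2_eq (haprω_nonneg ⇑T ω) (fun ω₀ hω₀ => key ω₀ hω₀) ⟨ω, hωG, rfl⟩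
    exact ⟨haprSub_span T ω F hspan, hB.symm, hB.trans hC.symm⟩
  · have h₁ : ∀ ω₀ : Finset H,
        haprSub ⇑T (Submodule.span ℂ (ω₀ : Set H)) = haprω ⇑T (ω₀ : Set H) :=
      fun ω₀ => haprSub_span T ω₀ _ rfl
    refine csSup_eq_csSup_of_forall_exists_le ?_ ?_
    · rintro x ⟨ω₀, rfl⟩
      refine ⟨_, ⟨Submodule.span ℂ (ω₀ : Set H), rfl⟩, ?_⟩
      haveI : FiniteDimensional ℂ (Submodule.span ℂ (ω₀ : Set H)) :=
        FiniteDimensional.span_of_finite ℂ ω₀.finite_toSet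
      haveI : Nonempty (FiniteDimensional ℂ (Submodule.span ℂ (ω₀ : Set H))) :=
        ⟨inferInstance⟩
      dsimp only
      rw [ciSup_const, h₁ ω₀]
    · rintro y ⟨F', rfl⟩
      by_cases hFD : FiniteDimensional ℂ ↥F'
      · obtain ⟨s, hs⟩ : F'.FG := (Submodule.fg_iff_finiteDimensional F').2 hFD
        refine ⟨_, ⟨s, rfl⟩, ?_⟩
        haveI : Nonempty (FiniteDimensional ℂ ↥F') := ⟨hFD⟩
        dsimp only
        rw [ciSup_const, haprSub_span T s F' hs]
      · haveI : IsEmpty (FiniteDimensional ℂ ↥F') := ⟨hFD⟩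
        refine ⟨_, ⟨(∅ : Finset H), rfl⟩, ?_⟩
        dsimp only
        rw [Real.iSup_of_isEmpty]
        exact haprω_nonneg ⇑T ∅
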